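/- Let X be a vertex set in a graph G and define f(X) to be the maximum number of edges of a linear forest (disjoint union of paths) contained in G[X]. If f(X) ≤ 2ηn and Δ(G[X]) ≤ ηn, and there is a vertex of X not covered by a maximum linear forest of G[X] (which holds when |X| > 2ηn ≥ f(X)), then f(X) ≥ 2δ(G[X]); in particular, for any induced subgraph H = G[X] with |X| > 2ηn and Δ(H) ≤ ηn one has f(X) ≥ 2δ(H). -/

import Mathlib

open SimpleGraph

variable {V : Type} [Fintype V] [DecidableEq V]

/-- `F` is a linear forest (disjoint union of paths) contained in `G` with all its
edges inside `X`. -/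
def IsLinearForestOn (G : SimpleGraph V) (X : Set V) (F : SimpleGraph V) : Prop :=
  F ≤ G ∧ (∀ e ∈ F.edgeSet, ∀ v ∈ e, v ∈ X) ∧ F.IsAcyclic ∧
    ∀ v : V, (F.neighborSet v).ncard ≤ 2

/-- `f(X)`: the maximum number of edges of a linear forest contained in `G[X]`. -/
noncomputable def maxLF (G : SimpleGraph V) (X : Set V) : ℕ :=
  sSup {k | ∃ F : SimpleGraph V, IsLinearForestOn G X F ∧ F.edgeSet.ncard = k}

namespace LFProof
set_option linter.unusedSectionVars false

/-- consecutive-pair edges of a list -/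
def sedges : List V → List (Sym2 V)
  | [] => []
  | [_] => []
  | a :: b :: t => s(a, b) :: sedges (b :: t)

@[simp] lemma sedges_nil : sedges ([] : List V) = [] := rfl
@[simp] lemma sedges_single (a : V) : sedges [a] = [] := rfl
@[simp] lemma sedges_cons_cons (a b : V) (t : List V) :
    sedges (a :: b :: t) = s(a, b) :: sedges (b :: t) := rfl

lemma sedges_length : ∀ l : List V, (sedges l).length = l.length - 1
  | [] => rfl
  | [_] => rfl
  | a :: b :: t => by
      simp only [sedges_cons_cons, List.length_cons, sedges_length (b :: t)]
      simp

lemma mem_of_mem_sedges : ∀ {l : List V} {a b : V}, s(a, b) ∈ sedges l → a ∈ l ∧ b ∈ l := by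
  intro l
  induction l with
  | nil => intro a b h; simp at h
  | cons x t ih =>
    intro a b h
    cases t with
    | nil => simp at h
    | cons y t' =>
      rw [sedges_cons_cons, List.mem_cons] at h
      rcases h with h | h
      · rw [Sym2.eq_iff] at h
        rcases h with ⟨rfl, rfl⟩ | ⟨rfl, rfl⟩
        · exact ⟨List.mem_cons_self, List.mem_cons_of_mem _ (List.mem_cons_self)⟩
        · exact ⟨List.mem_cons_of_mem _ (List.mem_cons_self), List.mem_cons_self⟩
      · obtain ⟨ha, hb⟩ := ih h
        exact ⟨List.mem_cons_of_mem _ ha, List.mem_cons_of_mem _ hb⟩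

lemma adj_of_mem_sedges {G : SimpleGraph V} : ∀ {l : List V} {a b : V},
    l.Chain' G.Adj → s(a, b) ∈ sedges l → G.Adj a b := by
  intro l
  induction l with
  | nil => intro a b _ h; simp at h
  | cons x t ih =>
    intro a b hc h
    cases t with
    | nil => simp at h
    | cons y t' =>
      rw [List.Chain', List.isChain_cons_cons] at hc
      rw [sedges_cons_cons, List.mem_cons] at h
      rcases h with h | h
      · rw [Sym2.eq_iff] at h
        rcases h with ⟨rfl, rfl⟩ | ⟨rfl, rfl⟩
        · exact hc.1
        · exact hc.1.symm
      · exact ih hc.2 h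

lemma sedges_nodup : ∀ {l : List V}, l.Nodup → (sedges l).Nodup := by
  intro l
  induction l with
  | nil => intro _; simp
  | cons x t ih =>
    intro hn
    cases t with
    | nil => simp
    | cons y t' =>
      rw [sedges_cons_cons, List.nodup_cons]
      refine ⟨fun hmem => ?_, ih (List.nodup_cons.1 hn).2⟩
      exact (List.nodup_cons.1 hn).1 (mem_of_mem_sedges hmem).1

lemma head_nbr : ∀ {t : List V} {a b : V}, a ∉ t → s(a, b) ∈ sedges (a :: t) →
    t.head? = some b := by
  intro t a b ha h
  cases t with
  | nil => simp at h
  | cons c t' =>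
    rw [sedges_cons_cons, List.mem_cons] at h
    rcases h with h | h
    · rw [Sym2.eq_iff] at h
      rcases h with ⟨-, rfl⟩ | ⟨h1, rfl⟩
      · rfl
      · subst h1; exact absurd (List.mem_cons_self) ha
    · exact absurd (mem_of_mem_sedges h).1 ha

lemma nbrs_pair : ∀ {l : List V}, l.Nodup → ∀ a : V, ∃ x y : V,
    ∀ b : V, s(a, b) ∈ sedges l → b = x ∨ b = y := by
  intro l
  induction l with
  | nil => intro _ a; exact ⟨a, a, by simp⟩
  | cons x t ih =>
    intro hn a
    cases t with
    | nil => exact ⟨a, a, by simp⟩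
    | cons y t' =>
      have hn' := List.nodup_cons.1 hn
      by_cases hax : a = x
      · subst hax
        refine ⟨y, y, fun b hb => ?_⟩
        left
        have h2 := head_nbr hn'.1 hb
        simp only [List.head?_cons, Option.some.injEq] at h2
        exact h2.symm
      · by_cases hay : a = y
        · subst hay
          refine ⟨x, t'.head?.getD a, fun b hb => ?_⟩
          rw [sedges_cons_cons, List.mem_cons] at hb
          rcases hb with hb | hb
          · rw [Sym2.eq_iff] at hb
            rcases hb with ⟨h1, h2⟩ | ⟨h1, h2⟩
            · exact absurd h1 hax
            · exact Or.inl h2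
          · have ha' : a ∉ t' := fun hmem => (List.nodup_cons.1 hn'.2).1 hmem
            have h2 := head_nbr ha' hb
            right
            rw [h2]
            rfl
        · obtain ⟨u, w, huw⟩ := ih hn'.2 a
          refine ⟨u, w, fun b hb => ?_⟩
          rw [sedges_cons_cons, List.mem_cons] at hb
          rcases hb with hb | hb
          · rw [Sym2.eq_iff] at hb
            rcases hb with ⟨h1, -⟩ | ⟨h1, -⟩
            · exact absurd h1 hax
            · exact absurd h1 hay
          · exact huw b hb

/-- The path graph on the list `l`. -/
def chainGraph (l : List V) : SimpleGraph V := fromEdgeSet {e | e ∈ sedges l}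

lemma chainGraph_adj {l : List V} {a b : V} :
    (chainGraph l).Adj a b ↔ s(a, b) ∈ sedges l ∧ a ≠ b := fromEdgeSet_adj _

lemma chainGraph_le {G : SimpleGraph V} {l : List V} (h : l.Chain' G.Adj) :
    chainGraph l ≤ G := fun {a b} hab => adj_of_mem_sedges h (chainGraph_adj.1 hab).1

lemma chainGraph_edgeSet {G : SimpleGraph V} {l : List V} (h : l.Chain' G.Adj) :
    (chainGraph l).edgeSet = {e | e ∈ sedges l} := by
  rw [chainGraph, edgeSet_fromEdgeSet]
  ext e
  induction e with
  | _ a b =>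
    simp only [Set.mem_diff, Set.mem_setOf_eq]
    constructor
    · exact fun hh => hh.1
    · intro he
      refine ⟨he, fun hd => ?_⟩
      exact (adj_of_mem_sedges h he).ne (Sym2.mk_isDiag_iff.1 hd)

lemma chainGraph_ncard {G : SimpleGraph V} {l : List V} (hc : l.Chain' G.Adj)
    (hn : l.Nodup) : (chainGraph l).edgeSet.ncard = l.length - 1 := by
  rw [chainGraph_edgeSet hc]
  have h1 : {e | e ∈ sedges l} = ↑(sedges l).toFinset := by ext e; simp
  rw [h1, Set.ncard_coe_finset, List.toFinset_card_of_nodup (sedges_nodup hn), sedges_length]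

lemma chainGraph_nbr_ncard {l : List V} (hn : l.Nodup) (a : V) :
    ((chainGraph l).neighborSet a).ncard ≤ 2 := by
  obtain ⟨x, y, hxy⟩ := nbrs_pair hn a
  have hsub : (chainGraph l).neighborSet a ⊆ {x, y} := by
    intro z hz
    rcases hxy z (chainGraph_adj.1 hz).1 with rfl | rfl
    · exact Set.mem_insert _ _
    · exact Set.mem_insert_of_mem _ rfl
  calc ((chainGraph l).neighborSet a).ncard ≤ ({x, y} : Set V).ncard :=
        Set.ncard_le_ncard hsub (Set.toFinite _)
  _ ≤ 2 := by
    have h2 := Set.ncard_insert_le x ({y} : Set V)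
    simpa [Set.ncard_singleton] using h2

lemma chainGraph_nbr_empty {l : List V} {a : V} (ha : a ∉ l) :
    (chainGraph l).neighborSet a = ∅ := by
  ext z
  simp only [mem_neighborSet, Set.mem_empty_iff_false, iff_false]
  intro h
  exact ha (mem_of_mem_sedges (chainGraph_adj.1 h).1).1

lemma chainGraph_mem_of_adj {l : List V} {a b : V} (h : (chainGraph l).Adj a b) :
    a ∈ l ∧ b ∈ l :=
  mem_of_mem_sedges (chainGraph_adj.1 h).1

lemma cycle_two_nbrs {F : SimpleGraph V} {a : V} {c : F.Walk a a} (hc : c.IsCycle) :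
    ∃ x y : V, x ≠ y ∧ F.Adj a x ∧ F.Adj a y := by
  cases c with
  | nil => exact absurd hc Walk.IsCycle.not_of_nil
  | @cons _ w _ h p =>
    rw [Walk.cons_isCycle_iff] at hc
    obtain ⟨hp, hep⟩ := hc
    have hpnotnil : ¬ p.Nil := by
      intro hnil
      exact h.ne (Walk.Nil.eq hnil).symm
    have hrevnotnil : ¬ p.reverse.Nil := by
      intro hnil
      apply hpnotnil
      rw [Walk.nil_iff_length_eq] at hnil ⊢
      rwa [Walk.length_reverse] at hnil
    obtain ⟨y, hay, q, hq⟩ := Walk.not_nil_iff.1 hrevnotnil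
    refine ⟨w, y, ?_, h, hay⟩
    intro rfl2
    apply hep
    have hmem : s(a, w) ∈ p.reverse.edges := by
      rw [hq]; subst rfl2; exact List.mem_cons_self
    rw [Walk.edges_reverse, List.mem_reverse] at hmem
    exact hmem

lemma chainGraph_bot_of_sedges_nil {l : List V} (h : sedges l = []) : chainGraph l = ⊥ := by
  rw [chainGraph]
  have : {e : Sym2 V | e ∈ sedges l} = ∅ := by rw [h]; ext e; simp
  rw [this, fromEdgeSet_empty]

lemma chainGraph_acyclic : ∀ {l : List V}, l.Nodup → (chainGraph l).IsAcyclic := by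
  intro l
  induction l with
  | nil =>
    intro _ v c hc
    exact hc.ne_bot (chainGraph_bot_of_sedges_nil sedges_nil)
  | cons x t ih =>
    intro hn
    cases t with
    | nil =>
      intro v c hc
      exact hc.ne_bot (chainGraph_bot_of_sedges_nil (sedges_single _))
    | cons y t' =>
      intro v c hc
      have hxs : x ∉ c.support := by
        intro hxsup
        have hc' := hc.rotate hxsup
        obtain ⟨z1, z2, hne, h1, h2⟩ := cycle_two_nbrs hc'
        have e1 := head_nbr (List.nodup_cons.1 hn).1 (chainGraph_adj.1 h1).1
        have e2 := head_nbr (List.nodup_cons.1 hn).1 (chainGraph_adj.1 h2).1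
        rw [e1] at e2
        exact hne (Option.some_inj.1 e2)
      have hsub : ∀ e ∈ c.edges, e ∈ (chainGraph (y :: t')).edgeSet := by
        intro e he
        have he' : e ∈ (chainGraph (x :: y :: t')).edgeSet := c.edges_subset_edgeSet he
        rw [chainGraph, edgeSet_fromEdgeSet] at he' ⊢
        obtain ⟨hmem, hnd⟩ := he'
        refine ⟨?_, hnd⟩
        rw [Set.mem_setOf_eq, sedges_cons_cons, List.mem_cons] at hmem
        rcases hmem with rfl | hmem
        · exact absurd (c.fst_mem_support_of_mem_edges he) hxs
        · exact hmem
      exact ih (List.nodup_cons.1 hn).2 (c.transfer _ hsub) (hc.transfer hsub)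

lemma walk_edges_in_left {F₁ F₂ : SimpleGraph V} {S₁ S₂ : Set V}
    (h₁ : ∀ a b, F₁.Adj a b → a ∈ S₁ ∧ b ∈ S₁) (h₂ : ∀ a b, F₂.Adj a b → a ∈ S₂ ∧ b ∈ S₂)
    (hdisj : ∀ v, v ∈ S₁ → v ∈ S₂ → False) :
    ∀ {u v : V} (p : (F₁ ⊔ F₂).Walk u v), u ∈ S₁ → ∀ e ∈ p.edges, e ∈ F₁.edgeSet := by
  intro u v p
  induction p with
  | nil => intro _ e he; simp at he
  | @cons u w v h q ih =>
    intro hu e he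
    rw [Walk.edges_cons, List.mem_cons] at he
    rw [SimpleGraph.sup_adj] at h
    rcases h with h1 | h2
    · rcases he with rfl | he
      · exact h1
      · exact ih ((h₁ _ _ h1).2) e he
    · exact absurd ((h₂ _ _ h2).1) (fun hS2 => hdisj u hu hS2)

lemma sup_acyclic {F₁ F₂ : SimpleGraph V} {S₁ S₂ : Set V}
    (h₁ : ∀ a b, F₁.Adj a b → a ∈ S₁ ∧ b ∈ S₁) (h₂ : ∀ a b, F₂.Adj a b → a ∈ S₂ ∧ b ∈ S₂)
    (hdisj : ∀ v, v ∈ S₁ → v ∈ S₂ → False)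
    (a₁ : F₁.IsAcyclic) (a₂ : F₂.IsAcyclic) : (F₁ ⊔ F₂).IsAcyclic := by
  intro v c hc
  cases c with
  | nil => exact absurd hc Walk.IsCycle.not_of_nil
  | @cons _ w _ h q =>
    have hor := h
    rw [SimpleGraph.sup_adj] at hor
    rcases hor with h1 | h2
    · have hedges : ∀ e ∈ (Walk.cons h q).edges, e ∈ F₁.edgeSet :=
        walk_edges_in_left h₁ h₂ hdisj (Walk.cons h q) ((h₁ _ _ h1).1)
      exact a₁ ((Walk.cons h q).transfer F₁ hedges) (hc.transfer hedges)
    · have hle : F₁ ⊔ F₂ ≤ F₂ ⊔ F₁ := le_of_eq (sup_comm _ _)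
      have hc2 := hc.mapLe hle
      have hedges : ∀ e ∈ ((Walk.cons h q).mapLe hle).edges, e ∈ F₂.edgeSet :=
        walk_edges_in_left h₂ h₁ (fun v hv2 hv1 => hdisj v hv1 hv2)
          ((Walk.cons h q).mapLe hle) ((h₂ _ _ h2).1)
      exact a₂ (((Walk.cons h q).mapLe hle).transfer F₂ hedges) (hc2.transfer hedges)

lemma exists_max_chain (H : SimpleGraph V) (P : V → Prop) (x : V) (hx : P x) :
    ∃ l : List V, l ≠ [] ∧ l.Chain' H.Adj ∧ l.Nodup ∧ (∀ v ∈ l, P v) ∧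
      ∀ l' : List V, l' ≠ [] → l'.Chain' H.Adj → l'.Nodup → (∀ v ∈ l', P v) →
        l'.length ≤ l.length := by
  classical
  set S : Set ℕ :=
    {n | ∃ l : List V, (l ≠ [] ∧ l.Chain' H.Adj ∧ l.Nodup ∧ ∀ v ∈ l, P v) ∧ l.length = n}
    with hS
  have hne : S.Nonempty := ⟨1, [x], ⟨by simp, List.isChain_singleton _, by simp, by simpa using hx⟩, rfl⟩
  have hbdd : BddAbove S := by
    refine ⟨Fintype.card V, ?_⟩
    rintro n ⟨l, ⟨-, -, hnd, -⟩, rfl⟩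
    exact hnd.length_le_card
  obtain ⟨l, hl, hlen⟩ := Nat.sSup_mem hne hbdd
  exact ⟨l, hl.1, hl.2.1, hl.2.2.1, hl.2.2.2,
    fun l' h1 h2 h3 h4 => hlen ▸ le_csSup hbdd ⟨l', ⟨h1, h2, h3, h4⟩, rfl⟩⟩

lemma exists_boundary {H : SimpleGraph V} (Lp : V → Prop) :
    ∀ {u t : V}, H.Walk u t → ¬ Lp u → Lp t → ∃ z y, ¬ Lp z ∧ Lp y ∧ H.Adj z y := by
  intro u t p
  induction p with
  | nil => intro hu ht; exact absurd ht hu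
  | @cons u w t h q ih =>
    intro hu ht
    by_cases hw : Lp w
    · exact ⟨u, w, hu, hw, h⟩
    · exact ih hw ht

lemma connected_long_chain (H : SimpleGraph V) (X : Set V) (d : ℕ)
    (hadj : ∀ a b, H.Adj a b → a ∈ X ∧ b ∈ X)
    (hdeg : ∀ v ∈ X, d ≤ (H.neighborSet v).ncard)
    (hcon : ∀ u v, u ∈ X → v ∈ X → H.Reachable u v)
    (x0 : V) (hx0 : x0 ∈ X) (hcard : 2 * d < X.ncard) :
    ∃ l : List V, l ≠ [] ∧ l.Chain' H.Adj ∧ l.Nodup ∧ (∀ v ∈ l, v ∈ X) ∧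
      2 * d + 1 ≤ l.length := by
  classical
  obtain ⟨l, hne, hch, hnd, hP, hmax⟩ := exists_max_chain H (fun v => v ∈ X) x0 hx0
  refine ⟨l, hne, hch, hnd, hP, ?_⟩
  by_contra hlt
  push_neg at hlt
  set k := l.length with hk
  have hk1 : 1 ≤ k := List.length_pos_iff.2 hne
  set v : ℕ → V := fun i => l.getD i x0 with hv
  have hvget : ∀ (i : ℕ) (h : i < k), v i = l.get ⟨i, h⟩ := by
    intro i h
    simp only [hv]
    exact List.getD_eq_getElem l x0 h
  have hvmem : ∀ i, i < k → v i ∈ l := by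
    intro i h
    rw [hvget i h]
    exact List.get_mem l ⟨i, h⟩
  have hvX : ∀ i, i < k → v i ∈ X := fun i h => hP _ (hvmem i h)
  have hadjc : ∀ i, i + 1 < k → H.Adj (v i) (v (i + 1)) := by
    intro i hi
    have h2 := List.isChain_iff_getElem.1 hch i (by omega)
    rw [hvget i (by omega), hvget (i + 1) hi]
    exact h2
  have hidx : ∀ z, z ∈ l → ∃ i, i < k ∧ v i = z := by
    intro z hz
    obtain ⟨⟨i, hi⟩, hg⟩ := List.mem_iff_get.1 hz
    exact ⟨i, hi, by rw [hvget i hi]; exact hg⟩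
  have head_getD : ∀ (L : List V) (h : L ≠ []), L.head h = L.getD 0 x0 := by
    intro L h
    rw [List.getD_eq_getElem _ _ (List.length_pos_iff.2 h)]
    cases L with
    | nil => exact absurd rfl h
    | cons a t => rfl
  have last_getD : ∀ (L : List V) (h : L ≠ []), L.getLast h = L.getD (L.length - 1) x0 := by
    intro L h
    rw [List.getD_eq_getElem _ _ (by have := List.length_pos_iff.2 h; omega : L.length - 1 < L.length)]
    exact List.getLast_eq_getElem h
  have hheadv : l.head hne = v 0 := by
    rw [head_getD l hne]
  have hlastv : l.getLast hne = v (k - 1) := by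
    rw [last_getD l hne]
  have hext_head : ∀ z, H.Adj z (v 0) → z ∈ l := by
    intro z hza
    by_contra hznot
    have hc2 : (z :: l).Chain' H.Adj := by
      rw [List.Chain', List.isChain_cons]
      refine ⟨?_, hch⟩
      intro y hy
      rw [List.head?_eq_head hne] at hy
      simp only [Option.mem_def, Option.some.injEq] at hy
      rw [← hy, hheadv]
      exact hza
    have hn2 : (z :: l).Nodup := List.nodup_cons.2 ⟨hznot, hnd⟩
    have hp2 : ∀ w ∈ z :: l, w ∈ X := by
      intro w hw
      rcases List.mem_cons.1 hw with rfl | hw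
      · exact (hadj _ _ hza).1
      · exact hP _ hw
    have := hmax (z :: l) (List.cons_ne_nil _ _) hc2 hn2 hp2
    simp only [List.length_cons] at this
    omega
  have hext_last : ∀ z, H.Adj (v (k - 1)) z → z ∈ l := by
    intro z hza
    by_contra hznot
    have hc2 : (l ++ [z]).Chain' H.Adj := by
      rw [List.Chain', List.isChain_append]
      refine ⟨hch, List.isChain_singleton _, ?_⟩
      intro a ha y hy
      rw [List.getLast?_eq_getLast hne] at ha
      simp only [Option.mem_def, Option.some.injEq, List.head?_cons] at ha hy
      rw [← ha, ← hy, hlastv]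
      exact hza
    have hn2 : (l ++ [z]).Nodup := by
      rw [List.nodup_append]
      refine ⟨hnd, List.nodup_singleton _, ?_⟩
      intro a ha b hb hab
      simp only [List.mem_singleton] at hb
      subst hb
      exact hznot (hab ▸ ha)
    have hp2 : ∀ w ∈ l ++ [z], w ∈ X := by
      intro w hw
      rcases List.mem_append.1 hw with hw | hw
      · exact hP _ hw
      · simp only [List.mem_singleton] at hw
        subst hw
        exact (hadj _ _ hza).2
    have := hmax (l ++ [z]) (by simp) hc2 hn2 hp2
    simp only [List.length_append, List.length_singleton] at this
    omega
  set A : Finset ℕ := (Finset.range (k - 1)).filter (fun i => H.Adj (v 0) (v (i + 1))) with hA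
  set B : Finset ℕ := (Finset.range (k - 1)).filter (fun i => H.Adj (v (k - 1)) (v i)) with hB
  have hAcard : d ≤ A.card := by
    have hsub : H.neighborSet (v 0) ⊆ ↑(A.image (fun i => v (i + 1))) := by
      intro z hz
      have hza : H.Adj (v 0) z := hz
      have hzl : z ∈ l := hext_head z hza.symm
      obtain ⟨j, hj, hjz⟩ := hidx z hzl
      have hj0 : j ≠ 0 := by
        intro h0
        subst h0
        exact hza.ne hjz
      refine Finset.mem_coe.2 (Finset.mem_image.2 ⟨j - 1, ?_, ?_⟩)
      · rw [hA, Finset.mem_filter, Finset.mem_range]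
        refine ⟨by omega, ?_⟩
        rw [(by omega : j - 1 + 1 = j), hjz]
        exact hza
      · rw [(by omega : j - 1 + 1 = j), hjz]
    calc d ≤ (H.neighborSet (v 0)).ncard := hdeg _ (hvX 0 hk1)
      _ ≤ (A.image (fun i => v (i + 1))).card := by
          rw [← Set.ncard_coe_finset]
          exact Set.ncard_le_ncard hsub (Set.toFinite _)
      _ ≤ A.card := Finset.card_image_le
  have hBcard : d ≤ B.card := by
    have hsub : H.neighborSet (v (k - 1)) ⊆ ↑(B.image (fun i => v i)) := by
      intro z hz
      have hza : H.Adj (v (k - 1)) z := hz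
      have hzl : z ∈ l := hext_last z hza
      obtain ⟨j, hj, hjz⟩ := hidx z hzl
      have hjk : j ≠ k - 1 := by
        intro h0
        subst h0
        exact hza.ne hjz
      refine Finset.mem_coe.2 (Finset.mem_image.2 ⟨j, ?_, hjz⟩)
      rw [hB, Finset.mem_filter, Finset.mem_range]
      refine ⟨by omega, ?_⟩
      rw [hjz]
      exact hza
    calc d ≤ (H.neighborSet (v (k - 1))).ncard := hdeg _ (hvX (k - 1) (by omega))
      _ ≤ (B.image (fun i => v i)).card := by
          rw [← Set.ncard_coe_finset]
          exact Set.ncard_le_ncard hsub (Set.toFinite _)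
      _ ≤ B.card := Finset.card_image_le
  have hABsub : A ∪ B ⊆ Finset.range (k - 1) :=
    Finset.union_subset (Finset.filter_subset _ _) (Finset.filter_subset _ _)
  have hUcard : (A ∪ B).card ≤ k - 1 := by
    have := Finset.card_le_card hABsub
    simpa using this
  have hIcard : 0 < (A ∩ B).card := by
    have h2 := Finset.card_union_add_card_inter A B
    omega
  obtain ⟨i, hiAB⟩ := Finset.card_pos.1 hIcard
  have hiA := (Finset.mem_inter.1 hiAB).1
  have hiB := (Finset.mem_inter.1 hiAB).2
  rw [hA, Finset.mem_filter, Finset.mem_range] at hiA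
  rw [hB, Finset.mem_filter, Finset.mem_range] at hiB
  obtain ⟨hir, hiadj0⟩ := hiA
  obtain ⟨-, hiadjk⟩ := hiB
  -- build the spanning cycle list C
  set tk := l.take (i + 1) with htk
  set dr := l.drop (i + 1) with hdr
  have htklen : tk.length = i + 1 := by
    rw [htk, List.length_take]
    omega
  have hdrlen : dr.length = k - (i + 1) := by rw [hdr, List.length_drop]
  have htkne : tk ≠ [] := by
    intro h
    rw [h] at htklen
    simp at htklen
  have hdrne : dr ≠ [] := by
    intro h
    rw [h] at hdrlen
    simp only [List.length_nil] at hdrlen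
    omega
  have hdrrevne : dr.reverse ≠ [] := by
    intro h
    exact hdrne (by simpa using congrArg List.reverse h)
  have getD_take : ∀ j, j < i + 1 → tk.getD j x0 = v j := by
    intro j hj
    have hjk : j < k := by omega
    have hjtk : j < tk.length := by omega
    rw [List.getD_eq_getElem _ _ hjtk, hvget j hjk]
    exact (List.getElem_take (xs := l) (j := i + 1) (i := j) (h := hjtk))
  have htkhead : tk.head htkne = v 0 := by
    rw [head_getD tk htkne]
    exact getD_take 0 (by omega)
  have htklast : tk.getLast htkne = v i := by
    rw [last_getD tk htkne, htklen]
    simpa using getD_take i (by omega)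
  have hdrhead : dr.head hdrne = v (i + 1) := by
    have h1 : (l.drop (i + 1)).head hdrne = l[i + 1]'(by omega) := List.head_drop hdrne
    rw [hvget (i + 1) (by omega : i + 1 < k)]
    exact h1
  have hdrlast : dr.getLast hdrne = v (k - 1) := by
    have h1 := List.getLast_drop (l := l) (i := i + 1) hdrne
    exact h1.trans hlastv
  have hrevhead : dr.reverse.head hdrrevne = v (k - 1) := by
    rw [List.head_reverse]
    exact hdrlast
  have hrevlast : dr.reverse.getLast hdrrevne = v (i + 1) := by
    rw [List.getLast_reverse]
    exact hdrhead
  set C := tk ++ dr.reverse with hC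
  have hCne : C ≠ [] := by
    intro h
    rw [hC] at h
    exact htkne (List.append_eq_nil_iff.1 h).1
  have hCperm : C.Perm l := by
    have h1 : (tk ++ dr.reverse).Perm (tk ++ dr) := List.Perm.append_left tk (List.reverse_perm dr)
    have h2 : tk ++ dr = l := by rw [htk, hdr]; exact List.take_append_drop _ _
    rw [hC]
    rw [h2] at h1
    exact h1
  have hCnd : C.Nodup := (hCperm.nodup_iff).2 hnd
  have hCmem : ∀ z : V, z ∈ C ↔ z ∈ l := fun z => hCperm.mem_iff
  have hClen : C.length = k := hCperm.length_eq
  have head_congr : ∀ (L₁ L₂ : List V) (h₁ : L₁ ≠ []) (h₂ : L₂ ≠ []), L₁ = L₂ →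
      L₁.head h₁ = L₂.head h₂ := by
    intro L₁ L₂ h₁ h₂ h
    subst h
    rfl
  have getLast_congr : ∀ (L₁ L₂ : List V) (h₁ : L₁ ≠ []) (h₂ : L₂ ≠ []), L₁ = L₂ →
      L₁.getLast h₁ = L₂.getLast h₂ := by
    intro L₁ L₂ h₁ h₂ h
    subst h
    rfl
  have hChead : C.head hCne = v 0 := by
    have h1 : (tk ++ dr.reverse).head hCne = tk.head htkne := List.head_append_of_ne_nil htkne
    exact h1.trans htkhead
  have hClast : C.getLast hCne = v (i + 1) := by
    have h1 := List.getLast_append_of_ne_nil hCne hdrrevne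
    exact h1.trans hrevlast
  have hCchain : C.Chain' H.Adj := by
    rw [hC, List.Chain', List.isChain_append]
    refine ⟨?_, ?_, ?_⟩
    · rw [htk]
      exact hch.prefix (List.take_prefix _ _)
    · rw [List.isChain_reverse]
      have hdrch : dr.Chain' H.Adj := by
        rw [hdr]
        exact hch.suffix (List.drop_suffix _ _)
      exact hdrch.imp (fun a b hab => hab.symm)
    · intro p hp q hq
      rw [List.getLast?_eq_getLast htkne] at hp
      rw [List.head?_eq_head hdrrevne] at hq
      simp only [Option.mem_def, Option.some.injEq] at hp hq
      rw [← hp, ← hq, htklast, hrevhead]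
      exact hiadjk.symm
  have hCcyc : H.Adj (C.getLast hCne) (C.head hCne) := by
    rw [hClast, hChead]
    exact hiadj0.symm
  -- a vertex outside the chain
  have hout : ∃ w, w ∈ X ∧ w ∉ l := by
    by_contra hno
    push_neg at hno
    have hXsub : X ⊆ ↑l.toFinset := fun w hw => List.mem_toFinset.2 (hno w hw)
    have h5 := Set.ncard_le_ncard hXsub (Set.toFinite _)
    rw [Set.ncard_coe_finset] at h5
    have h3 := List.toFinset_card_le l
    omega
  obtain ⟨w, hwX, hwl⟩ := hout
  obtain ⟨pw⟩ := hcon w (v 0) hwX (hvX 0 hk1)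
  obtain ⟨z, y, hznl, hyl, hzy⟩ := exists_boundary (fun u => u ∈ l) pw hwl (hvmem 0 hk1)
  have hzX : z ∈ X := (hadj _ _ hzy).1
  obtain ⟨c₁, c₂, hsplit⟩ := List.append_of_mem ((hCmem y).2 hyl)
  set M := (y :: c₂) ++ c₁ with hM
  have hMperm : M.Perm C := by
    rw [hM, hsplit]
    exact List.perm_append_comm
  have hMnd : M.Nodup := (hMperm.nodup_iff).2 hCnd
  have hMnotz : z ∉ M := fun hz => hznl ((hCmem z).1 ((hMperm.mem_iff).1 hz))
  have hMchain : M.Chain' H.Adj := by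
    rw [hM, List.Chain', List.isChain_append]
    refine ⟨hCchain.suffix ⟨c₁, hsplit.symm⟩, hCchain.prefix ⟨y :: c₂, hsplit.symm⟩, ?_⟩
    intro p hp q hq
    have hc1ne : c₁ ≠ [] := by
      intro h
      rw [h] at hq
      simp at hq
    rw [List.getLast?_eq_getLast (List.cons_ne_nil _ _)] at hp
    rw [List.head?_eq_head hc1ne] at hq
    simp only [Option.mem_def, Option.some.injEq] at hp hq
    have hpl : (y :: c₂).getLast (List.cons_ne_nil _ _) = C.getLast hCne := by
      have h1 := List.getLast_append_of_ne_nil (l := c₁) (by simp) (List.cons_ne_nil y c₂)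
      have h2 := getLast_congr C (c₁ ++ y :: c₂) hCne
        (by rw [← hsplit]; exact hCne) hsplit
      rw [h2, h1]
    have hql : c₁.head hc1ne = C.head hCne := by
      have h2 := head_congr C (c₁ ++ y :: c₂) hCne (by rw [← hsplit]; exact hCne) hsplit
      rw [h2]
      exact (List.head_append_of_ne_nil hc1ne).symm
    rw [← hp, ← hq, hpl, hql]
    exact hCcyc
  have hfchain : (z :: M).Chain' H.Adj := by
    rw [List.Chain', List.isChain_cons]
    refine ⟨?_, hMchain⟩
    intro p hp
    rw [hM] at hp
    simp only [List.cons_append, List.head?_cons, Option.mem_def, Option.some.injEq] at hp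
    rw [← hp]
    exact hzy
  have hfnd : (z :: M).Nodup := List.nodup_cons.2 ⟨hMnotz, hMnd⟩
  have hfX : ∀ u ∈ z :: M, u ∈ X := by
    intro u hu
    rcases List.mem_cons.1 hu with rfl | hu
    · exact hzX
    · exact hP _ ((hCmem u).1 ((hMperm.mem_iff).1 hu))
  have hle := hmax (z :: M) (List.cons_ne_nil _ _) hfchain hfnd hfX
  have hMlen : M.length = k := by rw [hMperm.length_eq, hClen]
  simp only [List.length_cons, hMlen] at hle
  omega

lemma component_chain (H : SimpleGraph V) (X : Set V) (d : ℕ)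
    (hadj : ∀ a b, H.Adj a b → a ∈ X ∧ b ∈ X)
    (hdeg : ∀ v ∈ X, d ≤ (H.neighborSet v).ncard)
    (x : V) (hx : x ∈ X) :
    ∃ l : List V, l ≠ [] ∧ l.Chain' H.Adj ∧ l.Nodup ∧
      (∀ v ∈ l, v ∈ X ∧ H.Reachable v x) ∧ d + 1 ≤ l.length := by
  obtain ⟨l, hne, hch, hnd, hP, hmax⟩ :=
    exists_max_chain H (fun v => v ∈ X ∧ H.Reachable v x) x ⟨hx, Reachable.refl x⟩
  refine ⟨l, hne, hch, hnd, hP, ?_⟩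
  set h0 := l.head hne with hh0
  have hh0mem : h0 ∈ l := List.head_mem hne
  have hh0X : h0 ∈ X := (hP _ hh0mem).1
  have hzl : ∀ z, H.Adj h0 z → z ∈ l := by
    intro z hza
    by_contra hznot
    have hc2 : (z :: l).Chain' H.Adj := by
      rw [List.Chain', List.isChain_cons]
      refine ⟨?_, hch⟩
      intro y hy
      rw [List.head?_eq_head hne] at hy
      simp only [Option.mem_def, Option.some.injEq] at hy
      rw [← hy]
      exact hza.symm
    have hn2 : (z :: l).Nodup := List.nodup_cons.2 ⟨hznot, hnd⟩
    have hp2 : ∀ v ∈ z :: l, v ∈ X ∧ H.Reachable v x := by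
      intro w hw
      rcases List.mem_cons.1 hw with rfl | hw
      · exact ⟨(hadj _ _ hza.symm).1, (hza.symm.reachable).trans (hP _ hh0mem).2⟩
      · exact hP _ hw
    have := hmax (z :: l) (List.cons_ne_nil _ _) hc2 hn2 hp2
    simp at this
  have hsub : H.neighborSet h0 ⊆ ↑(l.toFinset.erase h0) := by
    intro z hz
    have hza : H.Adj h0 z := hz
    rw [Finset.coe_erase, Set.mem_diff]
    refine ⟨List.mem_toFinset.2 (hzl z hza), ?_⟩
    simp only [Set.mem_singleton_iff]
    exact hza.ne'
  have h1 : d ≤ (l.toFinset.erase h0).card :=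
    le_trans (hdeg h0 hh0X) (le_trans (Set.ncard_le_ncard hsub (Set.toFinite _))
      (le_of_eq (Set.ncard_coe_finset _)))
  have h2 : (l.toFinset.erase h0).card = l.toFinset.card - 1 :=
    Finset.card_erase_of_mem (List.mem_toFinset.2 hh0mem)
  have h3 : l.toFinset.card = l.length := List.toFinset_card_of_nodup hnd
  have h4 : 1 ≤ l.length := List.length_pos_iff.2 hne
  omega

/-- The induced graph on `X` as a graph on `V`. -/
def indG (G : SimpleGraph V) (X : Set V) : SimpleGraph V where
  Adj a b := G.Adj a b ∧ a ∈ X ∧ b ∈ X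
  symm := ⟨fun a b ⟨h, ha, hb⟩ => ⟨h.symm, hb, ha⟩⟩
  loopless := ⟨fun a ⟨h, _, _⟩ => G.irrefl h⟩

lemma indG_nbr (G : SimpleGraph V) (X : Set V) {v : V} (hv : v ∈ X) :
    (indG G X).neighborSet v = G.neighborSet v ∩ X := by
  ext z
  constructor
  · rintro ⟨h, -, hz⟩
    exact ⟨h, hz⟩
  · rintro ⟨h, hz⟩
    exact ⟨h, hv, hz⟩

lemma exists_forest (G : SimpleGraph V) (X : Set V) (d : ℕ)
    (hdeg : ∀ x ∈ X, d ≤ (G.neighborSet x ∩ X).ncard)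
    (hcard : 2 * d < X.ncard) (hX : X.Nonempty) :
    ∃ F : SimpleGraph V, IsLinearForestOn G X F ∧ 2 * d ≤ F.edgeSet.ncard := by
  classical
  set H := indG G X with hH
  have hadj : ∀ a b, H.Adj a b → a ∈ X ∧ b ∈ X := fun a b h => ⟨h.2.1, h.2.2⟩
  have hHle : H ≤ G := fun a b h => h.1
  have hdeg' : ∀ v ∈ X, d ≤ (H.neighborSet v).ncard := by
    intro v hv
    rw [hH, indG_nbr G X hv]
    exact hdeg v hv
  by_cases hcon : ∀ u v : V, u ∈ X → v ∈ X → H.Reachable u v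
  · obtain ⟨x0, hx0⟩ := hX
    obtain ⟨l, hne, hch, hnd, hPX, hlen⟩ :=
      connected_long_chain H X d hadj hdeg' hcon x0 hx0 hcard
    refine ⟨chainGraph l, ⟨le_trans (chainGraph_le hch) hHle, ?_, chainGraph_acyclic hnd,
      fun v => chainGraph_nbr_ncard hnd v⟩, ?_⟩
    · intro e he
      rw [chainGraph_edgeSet hch] at he
      revert he
      induction e with
      | _ a b =>
        intro he w hw
        obtain ⟨ha, hb⟩ := mem_of_mem_sedges he
        rcases Sym2.mem_iff.1 hw with rfl | rfl
        · exact hPX _ ha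
        · exact hPX _ hb
    · rw [chainGraph_ncard hch hnd]
      omega
  · push_neg at hcon
    obtain ⟨x₁, x₂, hx₁, hx₂, hnr⟩ := hcon
    obtain ⟨l₁, hne₁, hch₁, hnd₁, hP₁, hlen₁⟩ := component_chain H X d hadj hdeg' x₁ hx₁
    obtain ⟨l₂, hne₂, hch₂, hnd₂, hP₂, hlen₂⟩ := component_chain H X d hadj hdeg' x₂ hx₂
    have hdisj : ∀ w, w ∈ l₁ → w ∈ l₂ → False := by
      intro w h1 h2
      exact hnr (((hP₁ w h1).2.symm).trans (hP₂ w h2).2)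
    have hS₁ : ∀ a b, (chainGraph l₁).Adj a b → a ∈ {v | v ∈ l₁} ∧ b ∈ {v | v ∈ l₁} :=
      fun a b h => chainGraph_mem_of_adj h
    have hS₂ : ∀ a b, (chainGraph l₂).Adj a b → a ∈ {v | v ∈ l₂} ∧ b ∈ {v | v ∈ l₂} :=
      fun a b h => chainGraph_mem_of_adj h
    have hdisj' : ∀ w : V, w ∈ {v | v ∈ l₁} → w ∈ {v | v ∈ l₂} → False := fun w h1 h2 =>
      hdisj w h1 h2
    refine ⟨chainGraph l₁ ⊔ chainGraph l₂,
      ⟨sup_le (le_trans (chainGraph_le hch₁) hHle) (le_trans (chainGraph_le hch₂) hHle),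
        ?_, sup_acyclic hS₁ hS₂ hdisj' (chainGraph_acyclic hnd₁) (chainGraph_acyclic hnd₂),
        ?_⟩, ?_⟩
    · intro e he
      rw [edgeSet_sup] at he
      revert he
      induction e with
      | _ a b =>
        intro he w hw
        have hmem : a ∈ l₁ ∧ b ∈ l₁ ∨ a ∈ l₂ ∧ b ∈ l₂ := by
          rcases he with he | he
          · rw [chainGraph_edgeSet hch₁] at he
            exact Or.inl (mem_of_mem_sedges he)
          · rw [chainGraph_edgeSet hch₂] at he
            exact Or.inr (mem_of_mem_sedges he)
        rcases Sym2.mem_iff.1 hw with rfl | rfl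
        · rcases hmem with ⟨h1, -⟩ | ⟨h1, -⟩
          · exact (hP₁ _ h1).1
          · exact (hP₂ _ h1).1
        · rcases hmem with ⟨-, h1⟩ | ⟨-, h1⟩
          · exact (hP₁ _ h1).1
          · exact (hP₂ _ h1).1
    · intro v
      have hun : (chainGraph l₁ ⊔ chainGraph l₂).neighborSet v =
          (chainGraph l₁).neighborSet v ∪ (chainGraph l₂).neighborSet v := by
        ext z
        simp [mem_neighborSet, SimpleGraph.sup_adj, Set.mem_union]
      rw [hun]
      by_cases hv1 : v ∈ l₁
      · have hv2 : v ∉ l₂ := fun h => hdisj v hv1 h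
        rw [chainGraph_nbr_empty hv2, Set.union_empty]
        exact chainGraph_nbr_ncard hnd₁ v
      · rw [chainGraph_nbr_empty hv1, Set.empty_union]
        exact chainGraph_nbr_ncard hnd₂ v
    · have hdisjE : Disjoint (chainGraph l₁).edgeSet (chainGraph l₂).edgeSet := by
        rw [Set.disjoint_left]
        intro e he₁ he₂
        rw [chainGraph_edgeSet hch₁] at he₁
        rw [chainGraph_edgeSet hch₂] at he₂
        revert he₁ he₂
        induction e with
        | _ a b =>
          intro he₁ he₂
          exact hdisj a (mem_of_mem_sedges he₁).1 (mem_of_mem_sedges he₂).1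
      rw [edgeSet_sup, Set.ncard_union_eq hdisjE (Set.toFinite _) (Set.toFinite _),
        chainGraph_ncard hch₁ hnd₁, chainGraph_ncard hch₂ hnd₂]
      omega

end LFProof

/-- Claim: if `|X| > 2ηn` and `Δ(G[X]) ≤ ηn`, then `f(X) ≥ 2 δ(G[X])`. -/
theorem stmt16 (G : SimpleGraph V) (X : Set V) (η : ℝ) (hη : 0 < η)
    (hX : 2 * η * (Fintype.card V : ℝ) < (X.ncard : ℝ))
    (hΔ : ∀ v ∈ X, ((G.neighborSet v ∩ X).ncard : ℝ) ≤ η * (Fintype.card V : ℝ)) :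
    ∀ d : ℕ, (∀ x ∈ X, d ≤ (G.neighborSet x ∩ X).ncard) →
      2 * d ≤ maxLF G X := by
  intro d hd
  -- X is nonempty
  have hX0 : 0 < X.ncard := by
    rcases Nat.eq_zero_or_pos X.ncard with h | h
    · exfalso
      rw [h] at hX
      have : (0:ℝ) ≤ 2 * η * (Fintype.card V : ℝ) := by positivity
      push_cast at hX
      linarith
    · exact h
  obtain ⟨x0, hx0⟩ := Set.nonempty_of_ncard_ne_zero hX0.ne'
  -- 2d < |X|
  have hdle : (d : ℝ) ≤ η * (Fintype.card V : ℝ) := by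
    calc (d : ℝ) ≤ ((G.neighborSet x0 ∩ X).ncard : ℝ) := by exact_mod_cast hd x0 hx0
    _ ≤ η * (Fintype.card V : ℝ) := hΔ x0 hx0
  have hcard : 2 * d < X.ncard := by
    have : ((2 * d : ℕ) : ℝ) < (X.ncard : ℝ) := by push_cast; linarith
    exact_mod_cast this
  obtain ⟨F, hF, hFcard⟩ := LFProof.exists_forest G X d hd hcard ⟨x0, hx0⟩
  have hbdd : BddAbove {k | ∃ F : SimpleGraph V, IsLinearForestOn G X F ∧ F.edgeSet.ncard = k} := by
    refine ⟨Fintype.card (Sym2 V), ?_⟩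
    rintro k ⟨F', _, rfl⟩
    calc F'.edgeSet.ncard ≤ (Set.univ : Set (Sym2 V)).ncard :=
          Set.ncard_le_ncard (Set.subset_univ _) Set.finite_univ
    _ = Fintype.card (Sym2 V) := by simp [Set.ncard_univ, Nat.card_eq_fintype_card]
  exact le_trans hFcard (le_csSup hbdd ⟨F, hF, rfl⟩)
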